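/- Local constancy in s of the p → 0 limit of J_m(z p^s) (the limit jumps only across the hyperplanes n·s + k = 0): Suppose c_m ≠ 0 for every multi-index m ≠ 0, fix real constants k_m for m ≠ 0, and for s ∈ ℝ^r set a_m(s) := ∑_{i=1}^r m_i s_i + k_m. Fix a multi-index n ≠ 0 and let U_n := {s ∈ ℝ^r : a_m(s) ≠ 0 for all m with 0 ≠ m ≤ n}. For each s ∈ U_n suppose J^{(s)} : ℕ^r → ((0,1) → M_N(ℂ)) satisfies, for all sufficiently small q > 0: J^{(s)}_0(q) = 1 and, for every 0 ≠ m ≤ n, (c_m q^{a_m(s)} − 1)·J^{(s)}_m(q) = ∑_{0 ≠ m′ ≤ m} J^{(s)}_{m−m′}(q)·R(m′). Then for every s ∈ U_n the limit L_n(s) := lim_{q→0⁺} J^{(s)}_n(q) exists, and the function s ↦ L_n(s) is locally constant on U_n; i.e., it can change only when s crosses one of the finitely many affine hyperplanes {s ∈ ℝ^r : ∑_i m_i s_i + k_m = 0} with 0 ≠ m ≤ n. -/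

import Mathlib

open Filter Topology

namespace ShiftedFusionAux

variable {r N : ℕ}

lemma sub_sum_lt {m m' : Fin r → ℕ} (h : m' ≤ m) (h0 : m' ≠ 0) :
    ∑ i, (m - m') i < ∑ i, m i := by
  obtain ⟨i, hi⟩ := Function.ne_iff.mp h0
  have hipos : 0 < m' i := Nat.pos_of_ne_zero hi
  refine Finset.sum_lt_sum (fun j _ => Nat.sub_le _ _) ⟨i, Finset.mem_univ i, ?_⟩
  exact Nat.sub_lt (lt_of_lt_of_le hipos (h i)) hipos

/-- The candidate limit: `Lrec 0 = 1`; for `m ≠ 0` it is `0` if `a m < 0` and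
`-∑ Lrec (m - m') * R m'` otherwise. -/
noncomputable def Lrec (R : (Fin r → ℕ) → Matrix (Fin N) (Fin N) ℂ)
    (a : (Fin r → ℕ) → ℝ) : (Fin r → ℕ) → Matrix (Fin N) (Fin N) ℂ
  | m =>
    if m = 0 then 1 else
      (if a m < 0 then (0 : ℂ) else -1) •
        ∑ m' ∈ ((Finset.Iic m).filter (· ≠ 0)).attach,
          Lrec R a (m - m'.1) * R m'.1
  termination_by m => ∑ i, m i
  decreasing_by
    have hm := m'.2
    simp only [Finset.mem_filter, Finset.mem_Iic] at hm
    exact sub_sum_lt hm.1 hm.2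

lemma Lrec_zero (R : (Fin r → ℕ) → Matrix (Fin N) (Fin N) ℂ)
    (a : (Fin r → ℕ) → ℝ) : Lrec R a 0 = 1 := by
  rw [Lrec]; simp

lemma Lrec_ne (R : (Fin r → ℕ) → Matrix (Fin N) (Fin N) ℂ)
    (a : (Fin r → ℕ) → ℝ) {m : Fin r → ℕ} (h : m ≠ 0) :
    Lrec R a m = (if a m < 0 then (0 : ℂ) else -1) •
      ∑ m' ∈ (Finset.Iic m).filter (· ≠ 0), Lrec R a (m - m') * R m' := by
  rw [Lrec, if_neg h,
    Finset.sum_attach ((Finset.Iic m).filter (· ≠ 0))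
      (fun m' => Lrec R a (m - m') * R m')]

/-- `Lrec` only depends on the signs of `a m` for `0 ≠ m ≤ n`. -/
lemma Lrec_congr (R : (Fin r → ℕ) → Matrix (Fin N) (Fin N) ℂ)
    {a a' : (Fin r → ℕ) → ℝ} (n : Fin r → ℕ)
    (h : ∀ m : Fin r → ℕ, m ≠ 0 → m ≤ n → (a m < 0 ↔ a' m < 0)) :
    ∀ m, m ≤ n → Lrec R a m = Lrec R a' m := by
  have key : ∀ d : ℕ, ∀ m : Fin r → ℕ, ∑ i, m i ≤ d → m ≤ n →
      Lrec R a m = Lrec R a' m := by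
    intro d
    induction d with
    | zero =>
      intro m hm _
      have : m = 0 := by
        funext i
        exact (Finset.sum_eq_zero_iff.mp (Nat.le_zero.mp hm)) i (Finset.mem_univ i)
      simp [this, Lrec_zero]
    | succ d ih =>
      intro m hm hmn
      by_cases h0 : m = 0
      · simp [h0, Lrec_zero]
      · rw [Lrec_ne R a h0, Lrec_ne R a' h0]
        have hsign : (if a m < 0 then (0 : ℂ) else -1) =
            (if a' m < 0 then (0 : ℂ) else -1) := by
          by_cases hlt : a m < 0
          · rw [if_pos hlt, if_pos ((h m h0 hmn).mp hlt)]
          · rw [if_neg hlt, if_neg (fun hl => hlt ((h m h0 hmn).mpr hl))]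
        rw [hsign]
        congr 1
        refine Finset.sum_congr rfl fun m' hm' => ?_
        simp only [Finset.mem_filter, Finset.mem_Iic] at hm'
        have hle : m - m' ≤ n := fun i =>
          le_trans (Nat.sub_le _ _) (hmn i)
        have hlt : ∑ i, (m - m') i < ∑ i, m i := sub_sum_lt hm'.1 hm'.2
        rw [ih (m - m') (by omega) hle]
  intro m hmn
  exact key (∑ i, m i) m le_rfl hmn

/-- The inverse factor `(c q^a - 1)⁻¹` tends to `0` if `a < 0` and `-1` if `a > 0`,
as `q → 0⁺`. -/
lemma tendsto_inv_factor {c : ℂ} (hc : c ≠ 0) {a : ℝ} (ha : a ≠ 0) :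
    Tendsto (fun q : ℝ => (c * ((q ^ a : ℝ) : ℂ) - 1)⁻¹) (𝓝[>] (0 : ℝ))
      (𝓝 (if a < 0 then (0 : ℂ) else -1)) ∧
    ∀ᶠ q in 𝓝[>] (0 : ℝ), c * ((q ^ a : ℝ) : ℂ) - 1 ≠ 0 := by
  rcases lt_or_gt_of_ne ha with hneg | hpos
  · -- a < 0 : the factor blows up
    have hpow : Tendsto (fun q : ℝ => q ^ a) (𝓝[>] (0 : ℝ)) atTop := by
      have hpos' : (0 : ℝ) < -a := by linarith
      have h1 : Tendsto (fun q : ℝ => q ^ (-a)) (𝓝[>] (0 : ℝ)) (𝓝 0) := by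
        have := (Real.continuousAt_rpow_const 0 (-a) (Or.inr hpos'.le)).tendsto
        rw [Real.zero_rpow (ne_of_gt hpos')] at this
        exact this.mono_left nhdsWithin_le_nhds
      have h2 : Tendsto (fun q : ℝ => q ^ (-a)) (𝓝[>] (0 : ℝ)) (𝓝[>] (0 : ℝ)) :=
        tendsto_nhdsWithin_of_tendsto_nhds_of_eventually_within _ h1
          (eventually_mem_nhdsWithin.mono fun q hq => Real.rpow_pos_of_pos hq _)
      have h3 := tendsto_inv_nhdsGT_zero.comp h2
      refine h3.congr' ?_
      filter_upwards [eventually_mem_nhdsWithin] with q hq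
      simp only [Function.comp_apply]
      rw [Real.rpow_neg (le_of_lt hq), inv_inv]
    have hnorm : Tendsto (fun q : ℝ => ‖c * ((q ^ a : ℝ) : ℂ) - 1‖)
        (𝓝[>] (0 : ℝ)) atTop := by
      have hlow : Tendsto (fun q : ℝ => ‖c‖ * q ^ a + (-1)) (𝓝[>] (0 : ℝ)) atTop :=
        tendsto_atTop_add_const_right _ _
          (hpow.const_mul_atTop (norm_pos_iff.mpr hc))
      refine tendsto_atTop_mono' _ ?_ hlow
      filter_upwards [eventually_mem_nhdsWithin] with q hq
      have h1 : ‖c * ((q ^ a : ℝ) : ℂ)‖ = ‖c‖ * q ^ a := by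
        rw [norm_mul, Complex.norm_real, Real.norm_eq_abs,
          abs_of_pos (Real.rpow_pos_of_pos hq a)]
      calc ‖c‖ * q ^ a + (-1) = ‖c * ((q ^ a : ℝ) : ℂ)‖ - ‖(1 : ℂ)‖ := by
            rw [h1, norm_one]; ring
        _ ≤ ‖c * ((q ^ a : ℝ) : ℂ) - 1‖ := norm_sub_norm_le _ _
    have hne : ∀ᶠ q in 𝓝[>] (0 : ℝ), c * ((q ^ a : ℝ) : ℂ) - 1 ≠ 0 := by
      filter_upwards [hnorm.eventually_gt_atTop 0] with q hq
      exact norm_pos_iff.mp hq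
    refine ⟨?_, hne⟩
    rw [if_pos hneg]
    rw [tendsto_zero_iff_norm_tendsto_zero]
    have := hnorm.inv_tendsto_atTop
    refine this.congr fun q => ?_
    simp [norm_inv]
  · -- a > 0 : the factor tends to -1
    have hpow : Tendsto (fun q : ℝ => q ^ a) (𝓝[>] (0 : ℝ)) (𝓝 0) := by
      have := (Real.continuousAt_rpow_const 0 a (Or.inr hpos.le)).tendsto
      rw [Real.zero_rpow (ne_of_gt hpos)] at this
      exact this.mono_left nhdsWithin_le_nhds
    have hf : Tendsto (fun q : ℝ => c * ((q ^ a : ℝ) : ℂ) - 1)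
        (𝓝[>] (0 : ℝ)) (𝓝 (-1)) := by
      have h1 : Tendsto (fun q : ℝ => ((q ^ a : ℝ) : ℂ)) (𝓝[>] (0 : ℝ)) (𝓝 0) := by
        have := (Complex.continuous_ofReal.tendsto 0).comp hpow
        rw [Complex.ofReal_zero] at this
        exact this
      have h2 : Tendsto (fun q : ℝ => c * ((q ^ a : ℝ) : ℂ)) (𝓝[>] (0 : ℝ))
          (𝓝 (c * 0)) := tendsto_const_nhds.mul h1
      have h3 := h2.sub
        (tendsto_const_nhds : Tendsto (fun _ : ℝ => (1 : ℂ)) (𝓝[>] (0 : ℝ)) (𝓝 1))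
      simpa using h3
    refine ⟨?_, hf.eventually_ne (by norm_num)⟩
    rw [if_neg (not_lt.mpr (by linarith : (0:ℝ) ≤ a))]
    have h4 := hf.inv₀ (by norm_num)
    norm_num at h4
    exact h4

/-- The main convergence lemma: under the recursion, `J m q → Lrec R a m`. -/
lemma tendsto_J (R : (Fin r → ℕ) → Matrix (Fin N) (Fin N) ℂ)
    (c : (Fin r → ℕ) → ℂ) (hc : ∀ m : Fin r → ℕ, m ≠ 0 → c m ≠ 0)
    (a : (Fin r → ℕ) → ℝ) (n : Fin r → ℕ)
    (ha : ∀ m : Fin r → ℕ, m ≠ 0 → m ≤ n → a m ≠ 0)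
    (J : (Fin r → ℕ) → ℝ → Matrix (Fin N) (Fin N) ℂ)
    (ε : ℝ) (hε : 0 < ε)
    (h0 : ∀ q : ℝ, 0 < q → q < ε → J 0 q = 1)
    (hrec : ∀ q : ℝ, 0 < q → q < ε → ∀ m : Fin r → ℕ, m ≠ 0 → m ≤ n →
      (c m * ((q ^ (a m) : ℝ) : ℂ) - 1) • J m q =
        ∑ m' ∈ (Finset.Iic m).filter (· ≠ 0), J (m - m') q * R m') :
    ∀ m, m ≤ n → Tendsto (J m) (𝓝[>] (0 : ℝ)) (𝓝 (Lrec R a m)) := by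
  have hsmall : ∀ᶠ q in 𝓝[>] (0 : ℝ), 0 < q ∧ q < ε := by
    filter_upwards [Ioo_mem_nhdsGT_of_mem (Set.mem_Ico.mpr ⟨le_refl 0, hε⟩)]
      with q hq
    exact ⟨hq.1, hq.2⟩
  have hzero : Tendsto (J 0) (𝓝[>] (0 : ℝ)) (𝓝 (Lrec R a 0)) := by
    rw [Lrec_zero]
    refine Tendsto.congr' ?_ (tendsto_const_nhds : Tendsto (fun _ : ℝ => (1 : Matrix (Fin N) (Fin N) ℂ)) _ _)
    filter_upwards [hsmall] with q hq
    exact (h0 q hq.1 hq.2).symm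
  have key : ∀ d : ℕ, ∀ m : Fin r → ℕ, ∑ i, m i ≤ d → m ≤ n →
      Tendsto (J m) (𝓝[>] (0 : ℝ)) (𝓝 (Lrec R a m)) := by
    intro d
    induction d with
    | zero =>
      intro m hm _
      have : m = 0 := by
        funext i
        exact (Finset.sum_eq_zero_iff.mp (Nat.le_zero.mp hm)) i (Finset.mem_univ i)
      rw [this]; exact hzero
    | succ d ih =>
      intro m hm hmn
      by_cases hm0 : m = 0
      · rw [hm0]; exact hzero
      · -- the sum S q tends to the limit sum
        have hS : Tendsto
            (fun q => ∑ m' ∈ (Finset.Iic m).filter (· ≠ 0), J (m - m') q * R m')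
            (𝓝[>] (0 : ℝ))
            (𝓝 (∑ m' ∈ (Finset.Iic m).filter (· ≠ 0), Lrec R a (m - m') * R m')) := by
          refine tendsto_finset_sum _ fun m' hm' => ?_
          simp only [Finset.mem_filter, Finset.mem_Iic] at hm'
          have hle : m - m' ≤ n := fun i => le_trans (Nat.sub_le _ _) (hmn i)
          have hlt : ∑ i, (m - m') i < ∑ i, m i := sub_sum_lt hm'.1 hm'.2
          exact (ih (m - m') (by omega) hle).mul tendsto_const_nhds
        obtain ⟨hinv, hne⟩ := tendsto_inv_factor (hc m hm0) (ha m hm0 hmn)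
        have heq : ∀ᶠ q in 𝓝[>] (0 : ℝ),
            (c m * ((q ^ (a m) : ℝ) : ℂ) - 1)⁻¹ •
              (∑ m' ∈ (Finset.Iic m).filter (· ≠ 0), J (m - m') q * R m') = J m q := by
          filter_upwards [hsmall, hne] with q hq hne'
          rw [← hrec q hq.1 hq.2 m hm0 hmn, inv_smul_smul₀ hne']
        have := hinv.smul hS
        rw [Lrec_ne R a hm0]
        exact this.congr' heq
  intro m hmn
  exact key (∑ i, m i) m le_rfl hmn

end ShiftedFusionAux

open ShiftedFusionAux in
/-- Local constancy in `s` of the `p → 0` limit of `J_m(z p^s)`: on the open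
set `U_n` where all exponents `a_m(s) = ∑ᵢ mᵢ sᵢ + k_m` (for `0 ≠ m ≤ n`) are
nonzero, the limit `L_n(s) = lim_{q→0⁺} J^{(s)}_n(q)` exists and is a locally
constant function of `s`; it jumps only across the hyperplanes
`∑ᵢ mᵢ sᵢ + k_m = 0`. -/
theorem shifted_fusion_operator_limit_locally_constant
    (r N : ℕ) (hr : 1 ≤ r) (hN : 1 ≤ N)
    (R : (Fin r → ℕ) → Matrix (Fin N) (Fin N) ℂ) (hR0 : R 0 = 0)
    (c : (Fin r → ℕ) → ℂ) (hc : ∀ m : Fin r → ℕ, m ≠ 0 → c m ≠ 0)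
    (k : (Fin r → ℕ) → ℝ)
    (n : Fin r → ℕ) (hn : n ≠ 0)
    (U : Set (Fin r → ℝ))
    (hU : U = {s : Fin r → ℝ | ∀ m : Fin r → ℕ, m ≠ 0 → m ≤ n →
      (∑ i, (m i : ℝ) * s i) + k m ≠ 0})
    (J : (Fin r → ℝ) → (Fin r → ℕ) → ℝ → Matrix (Fin N) (Fin N) ℂ)
    (hJ : ∀ s ∈ U, ∃ ε : ℝ, 0 < ε ∧ ∀ q : ℝ, 0 < q → q < ε →
      J s 0 q = 1 ∧ ∀ m : Fin r → ℕ, m ≠ 0 → m ≤ n →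
        (c m * ((q ^ ((∑ i, (m i : ℝ) * s i) + k m) : ℝ) : ℂ) - 1) • J s m q =
          ∑ m' ∈ (Finset.Iic m).filter (· ≠ 0), J s (m - m') q * R m') :
    ∃ L : (Fin r → ℝ) → Matrix (Fin N) (Fin N) ℂ,
      (∀ s ∈ U, Filter.Tendsto (J s n) (nhdsWithin 0 (Set.Ioi 0)) (nhds (L s))) ∧
      (∀ s ∈ U, ∀ᶠ s' in nhds s, s' ∈ U → L s' = L s) := by
  set a : (Fin r → ℝ) → (Fin r → ℕ) → ℝ :=
    fun s m => (∑ i, (m i : ℝ) * s i) + k m with ha_def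
  refine ⟨fun s => Lrec R (a s) n, ?_, ?_⟩
  · intro s hs
    obtain ⟨ε, hε, hprop⟩ := hJ s hs
    have ha : ∀ m : Fin r → ℕ, m ≠ 0 → m ≤ n → a s m ≠ 0 := by
      intro m hm0 hmn
      rw [hU] at hs
      exact hs m hm0 hmn
    exact tendsto_J R c hc (a s) n ha (J s) ε hε
      (fun q hq1 hq2 => (hprop q hq1 hq2).1)
      (fun q hq1 hq2 m hm0 hmn => (hprop q hq1 hq2).2 m hm0 hmn) n le_rfl
  · intro s hs
    rw [hU] at hs
    -- signs are locally constant near s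
    have hcont : ∀ m : Fin r → ℕ, Continuous fun s' => a s' m := by
      intro m
      exact (continuous_finset_sum _ fun i _ =>
        continuous_const.mul (continuous_apply i)).add continuous_const
    have hev : ∀ᶠ s' in nhds s, ∀ m ∈ (Finset.Iic n).filter (· ≠ 0),
        (a s m < 0 ↔ a s' m < 0) := by
      rw [eventually_all_finset]
      intro m hm
      simp only [Finset.mem_filter, Finset.mem_Iic] at hm
      have hne := hs m hm.2 hm.1
      by_cases hlt : a s m < 0
      · filter_upwards [(hcont m).continuousAt.tendsto.eventually_lt_const hlt]
          with s' hs'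
        exact ⟨fun _ => hs', fun _ => hlt⟩
      · have hgt : 0 < a s m := lt_of_le_of_ne (not_lt.mp hlt) (Ne.symm hne)
        filter_upwards [(hcont m).continuousAt.tendsto.eventually_const_lt hgt]
          with s' hs'
        exact ⟨fun h => absurd h hlt, fun h => absurd h (not_lt.mpr hs'.le)⟩
    filter_upwards [hev] with s' hs' _
    refine (Lrec_congr R n ?_ n le_rfl).symm
    intro m hm0 hmn
    exact hs' m (Finset.mem_filter.mpr ⟨Finset.mem_Iic.mpr hmn, hm0⟩)
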